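/- arXiv:2006.06501 — 2 statements merged into one kernel-verified Lean document; each statement's English description precedes it below -/
import Mathlib

section
/- Let f : H → ℝ on a Hilbert space be C², u* a point with δf(u*) = 0 and δ²f(u*) ≥ γ > 0, and suppose δ²f is Lipschitz with constant M near u*. Let g : H → ℝ be C² with ‖δg(u*)‖ ≤ ε and ‖δ²g(v) - δ²f(v)‖ ≤ γ/4 for v near u*. If ε ≤ γ²/(8M), then g has a critical point u_g with ‖u_g - u*‖ ≤ 4ε/γ. -/
open Metric
open InnerProductSpace

/-- Quantitative inverse function theorem for energy functionals: let `f` be `C²`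
with `δf(u*) = 0`, `δ²f(u*) ≥ γ > 0`, and `δ²f` Lipschitz with constant `M` on
`B(u*, r)`.  If `g` is `C²` with `‖δg(u*)‖ ≤ ε`, `‖δ²g - δ²f‖ ≤ γ/4` on `B(u*, r)`,
and `ε ≤ γ²/(8M)` (with `4ε/γ ≤ r`), then `g` has a critical point `u_g` with
`‖u_g - u*‖ ≤ 4ε/γ`. -/
theorem quantitative_inverse_function_theorem
    {H : Type*} [NormedAddCommGroup H] [InnerProductSpace ℝ H] [CompleteSpace H]
    (f g : H → ℝ) (hf : ContDiff ℝ 2 f) (hg : ContDiff ℝ 2 g)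
    (u : H) (γ M r ε : ℝ) (hγ : 0 < γ) (hM : 0 < M) (hr : 0 < r) (hε : 0 ≤ ε)
    (hcrit : fderiv ℝ f u = 0)
    (hstab : ∀ v : H, γ * ‖v‖ ^ 2 ≤ fderiv ℝ (fderiv ℝ f) u v v)
    (hLip : ∀ v ∈ ball u r, ∀ w ∈ ball u r,
      ‖fderiv ℝ (fderiv ℝ f) v - fderiv ℝ (fderiv ℝ f) w‖ ≤ M * ‖v - w‖)
    (hgres : ‖fderiv ℝ g u‖ ≤ ε)
    (hghess : ∀ v ∈ ball u r,
      ‖fderiv ℝ (fderiv ℝ g) v - fderiv ℝ (fderiv ℝ f) v‖ ≤ γ / 4)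
    (hsmall : ε ≤ γ ^ 2 / (8 * M)) (hrad : 4 * ε / γ ≤ r) :
    ∃ ug : H, fderiv ℝ g ug = 0 ∧ ‖ug - u‖ ≤ 4 * ε / γ := by
  -- trivial case ε = 0
  rcases eq_or_lt_of_le hε with hε0 | hεpos
  · refine ⟨u, ?_, ?_⟩
    · have : ‖fderiv ℝ g u‖ ≤ 0 := by rw [hε0]; exact hgres
      simpa using le_antisymm this (norm_nonneg _)
    · simp [← hε0]
  set δ : ℝ := 4 * ε / γ with hδdef
  have hδpos : 0 < δ := by positivity
  have hδr : δ ≤ r := hrad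
  have hMδ : M * δ ≤ γ / 2 := by
    have h8 : ε * (8 * M) ≤ γ ^ 2 := (le_div_iff₀ (by positivity)).mp hsmall
    rw [hδdef, show M * (4 * ε / γ) = 4 * M * ε / γ by ring,
      div_le_div_iff₀ hγ (by norm_num : (0:ℝ) < 2)]
    nlinarith

  set A := fderiv ℝ (fderiv ℝ f) u with hA
  have hAco : IsCoercive A := by
    refine ⟨γ, hγ, fun v => ?_⟩
    calc γ * ‖v‖ * ‖v‖ = γ * ‖v‖ ^ 2 := by ring
      _ ≤ _ := hstab v
  set E := hAco.continuousLinearEquivOfBilin with hE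
  clear_value E
  -- inverse bound
  have hEinv : ∀ x : H, ‖E.symm x‖ ≤ ‖x‖ / γ := by
    intro x
    have h1 : γ * ‖E.symm x‖ ^ 2 ≤ A (E.symm x) (E.symm x) := hstab _
    have h2 : A (E.symm x) (E.symm x) = ⟪x, E.symm x⟫_ℝ := by
      have h2' := hAco.continuousLinearEquivOfBilin_apply (E.symm x) (E.symm x)
      rw [← hE, E.apply_symm_apply] at h2'
      exact h2'.symm
    have h3 : ⟪x, E.symm x⟫_ℝ ≤ ‖x‖ * ‖E.symm x‖ := real_inner_le_norm x (E.symm x)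
    rw [le_div_iff₀ hγ]
    rw [h2] at h1
    rcases eq_or_lt_of_le (norm_nonneg (E.symm x)) with h0 | h0
    · rw [← h0, zero_mul]; exact norm_nonneg x
    · have h5 : γ * ‖E.symm x‖ * ‖E.symm x‖ ≤ ‖x‖ * ‖E.symm x‖ := by
        calc γ * ‖E.symm x‖ * ‖E.symm x‖ = γ * ‖E.symm x‖ ^ 2 := by ring
          _ ≤ ⟪x, E.symm x⟫_ℝ := h1
          _ ≤ ‖x‖ * ‖E.symm x‖ := h3
      have h6 := le_of_mul_le_mul_right h5 h0
      linarith
  -- gradient of g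
  set G : H → H := fun v => (InnerProductSpace.toDual ℝ H).symm (fderiv ℝ g v) with hG
  have hGnorm : ∀ v, ‖G v‖ = ‖fderiv ℝ g v‖ := fun v =>
    (InnerProductSpace.toDual ℝ H).symm.norm_map (fderiv ℝ g v)
  -- the Newton-type map
  set T : H → H := fun v => v - E.symm (G v) with hT
  -- differentiability facts
  have hg1 : ContDiff ℝ 1 (fderiv ℝ g) := hg.fderiv_right (by norm_num)
  have hgdiff : Differentiable ℝ (fderiv ℝ g) := hg1.differentiable one_ne_zero
  have hgcont : Continuous (fderiv ℝ (fderiv ℝ g)) := hg1.continuous_fderiv one_ne_zero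
  -- h v = fderiv g v - A v
  set h : H → (H →L[ℝ] ℝ) := fun v => fderiv ℝ g v - A v with hh
  have hhdiff : ∀ x : H, DifferentiableAt ℝ h x := fun x =>
    (hgdiff x).sub (A.differentiable x)
  have hhderiv : ∀ x : H, fderiv ℝ h x = fderiv ℝ (fderiv ℝ g) x - A := by
    intro x
    rw [hh]
    rw [fderiv_fun_sub (hgdiff x) (A.differentiable x)]
    simp [A.fderiv]
  -- the hessian bound on the closed ball
  have hbound : ∀ x ∈ closedBall u δ, ‖fderiv ℝ (fderiv ℝ g) x - A‖ ≤ 3 / 4 * γ := by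
    have hball : ∀ x ∈ ball u δ, ‖fderiv ℝ (fderiv ℝ g) x - A‖ ≤ 3 / 4 * γ := by
      intro x hx
      have hxr : x ∈ ball u r := ball_subset_ball hδr hx
      have h1 := hghess x hxr
      have h2 := hLip x hxr u (mem_ball_self hr)
      have hxu : ‖x - u‖ < δ := by
        rw [← dist_eq_norm]; exact mem_ball.mp hx
      calc ‖fderiv ℝ (fderiv ℝ g) x - A‖
          ≤ ‖fderiv ℝ (fderiv ℝ g) x - fderiv ℝ (fderiv ℝ f) x‖
            + ‖fderiv ℝ (fderiv ℝ f) x - A‖ := norm_sub_le_norm_sub_add_norm_sub (fderiv ℝ (fderiv ℝ g) x) (fderiv ℝ (fderiv ℝ f) x) A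
        _ ≤ γ / 4 + M * ‖x - u‖ := add_le_add h1 h2
        _ ≤ γ / 4 + M * δ := by
            linarith only [mul_le_mul_of_nonneg_left hxu.le hM.le]
        _ ≤ 3 / 4 * γ := by linarith only [hMδ]
    have hclosed : IsClosed {x : H | ‖fderiv ℝ (fderiv ℝ g) x - A‖ ≤ 3 / 4 * γ} :=
      isClosed_le (Continuous.norm (E := H →L[ℝ] H →L[ℝ] ℝ) (hgcont.sub continuous_const)) continuous_const
    intro x hx
    have : closedBall u δ ⊆ {x : H | ‖fderiv ℝ (fderiv ℝ g) x - A‖ ≤ 3 / 4 * γ} := by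
      rw [← closure_ball u hδpos.ne']
      exact hclosed.closure_subset_iff.mpr hball
    exact this hx
  -- Lipschitz estimate for T on the closed ball
  have hTdiff : ∀ v ∈ closedBall u δ, ∀ w ∈ closedBall u δ,
      ‖T v - T w‖ ≤ 3 / 4 * ‖v - w‖ := by
    intro v hv w hw
    have hmvt : ‖h v - h w‖ ≤ 3 / 4 * γ * ‖v - w‖ := by
      refine (convex_closedBall u δ).norm_image_sub_le_of_norm_fderiv_le
        (fun x _ => hhdiff x) (fun x hx => ?_) hw hv
      rw [hhderiv x]; exact hbound x hx
    have hkey : T v - T w = E.symm (E (v - w) - (G v - G w)) := by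
      rw [hT]
      simp only [map_sub, E.symm_apply_apply]
      abel
    have hnorm2 : ‖E (v - w) - (G v - G w)‖ = ‖h v - h w‖ := by
      have hEtd : ∀ z : H, InnerProductSpace.toDual ℝ H (E z) = A z := by
        intro z
        ext y
        rw [InnerProductSpace.toDual_apply_apply, hE]
        exact hAco.continuousLinearEquivOfBilin_apply z y
      have : InnerProductSpace.toDual ℝ H (E (v - w) - (G v - G w))
          = A (v - w) - (fderiv ℝ g v - fderiv ℝ g w) := by
        simp only [map_sub, hEtd, hG]
        simp
      calc ‖E (v - w) - (G v - G w)‖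
          = ‖InnerProductSpace.toDual ℝ H (E (v - w) - (G v - G w))‖ :=
            (LinearIsometryEquiv.norm_map _ _).symm
        _ = ‖A (v - w) - (fderiv ℝ g v - fderiv ℝ g w)‖ := by rw [this]
        _ = ‖h v - h w‖ := by
            rw [hh]
            rw [← norm_neg]
            congr 1
            simp only [map_sub]
            abel
    calc ‖T v - T w‖ = ‖E.symm (E (v - w) - (G v - G w))‖ := by rw [hkey]
      _ ≤ ‖E (v - w) - (G v - G w)‖ / γ := hEinv _
      _ = ‖h v - h w‖ / γ := by rw [hnorm2]
      _ ≤ 3 / 4 * γ * ‖v - w‖ / γ := (div_le_div_iff_of_pos_right hγ).mpr hmvt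
      _ = 3 / 4 * ‖v - w‖ := by field_simp
  -- T maps the closed ball into itself
  have hTu : ‖T u - u‖ ≤ ε / γ := by
    have : T u - u = -(E.symm (G u)) := by rw [hT]; show u - E.symm (G u) - u = _; abel
    rw [this, norm_neg]
    calc ‖E.symm (G u)‖ ≤ ‖G u‖ / γ := hEinv _
      _ = ‖fderiv ℝ g u‖ / γ := by rw [hGnorm]
      _ ≤ ε / γ := (div_le_div_iff_of_pos_right hγ).mpr hgres
  have humem : u ∈ closedBall u δ := mem_closedBall_self hδpos.le
  have hmaps : Set.MapsTo T (closedBall u δ) (closedBall u δ) := by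
    intro v hv
    rw [mem_closedBall, dist_eq_norm]
    have hvu : ‖v - u‖ ≤ δ := by rw [← dist_eq_norm]; exact mem_closedBall.mp hv
    calc ‖T v - u‖ ≤ ‖T v - T u‖ + ‖T u - u‖ := norm_sub_le_norm_sub_add_norm_sub _ _ _
      _ ≤ 3 / 4 * ‖v - u‖ + ε / γ := add_le_add (hTdiff v hv u humem) hTu
      _ ≤ 3 / 4 * δ + ε / γ := by linarith only [hvu]
      _ = δ := by rw [hδdef]; field_simp; ring
  -- contraction on the closed ball
  have hcontr : ContractingWith (3/4 : NNReal) (hmaps.restrict T _ _) := by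
    constructor
    · rw [← NNReal.coe_lt_coe]; norm_num
    · apply LipschitzWith.of_dist_le_mul
      rintro ⟨x, hx⟩ ⟨y, hy⟩
      rw [Subtype.dist_eq, Subtype.dist_eq, dist_eq_norm, dist_eq_norm]
      have : ((3/4 : NNReal) : ℝ) = 3 / 4 := by norm_num
      rw [this]
      exact hTdiff x hx y hy
  obtain ⟨y, hy, hfix, -⟩ := hcontr.exists_fixedPoint'
    (isClosed_closedBall.isComplete) hmaps humem (edist_ne_top _ _)
  refine ⟨y, ?_, ?_⟩
  · have hTy : T y = y := hfix
    have : E.symm (G y) = 0 := by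
      have := hTy
      rw [hT] at this
      simp only [sub_eq_self] at this
      exact this
    have hGy : G y = 0 := by
      have := congrArg E this
      rwa [E.apply_symm_apply, map_zero] at this
    have : (InnerProductSpace.toDual ℝ H).symm (fderiv ℝ g y) = 0 := hGy
    rwa [LinearIsometryEquiv.map_eq_zero_iff] at this
  · rw [← dist_eq_norm]
    exact mem_closedBall.mp hy
end

section
/- Suppose T : H → H* is Lipschitz with constant L on the ball B(u*, r), δT exists and satisfies ⟨δT(u*)v, v⟩ ≥ γ‖v‖² with γ > 0, and ‖T(u*)‖_{H*} ≤ ε with ε ≤ γ r / 2 and additionally δT is continuous with modulus ω satisfying ω(r) ≤ γ/2. Then T has a zero ū in B(u*, 2ε/γ). -/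
open Metric
open scoped InnerProductSpace

set_option maxHeartbeats 1000000 in
/-- Zero-finding inverse function theorem for force operators `T : H → H*`:
if `T` is Lipschitz with constant `L` on `B(u*, r)`, `δT(u*)` is coercive with
constant `γ > 0`, `‖T(u*)‖ ≤ ε ≤ γ r / 2`, and `δT` is continuous with a monotone
modulus `ω` satisfying `ω(r) ≤ γ/2`, then `T` has a zero in the closed ball
`B(u*, 2ε/γ)`. -/
theorem force_based_inverse_function_theorem
    {H : Type*} [NormedAddCommGroup H] [InnerProductSpace ℝ H] [CompleteSpace H]
    (T : H → (H →L[ℝ] ℝ)) (u : H) (L : NNReal) (r γ ε : ℝ)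
    (hr : 0 < r) (hγ : 0 < γ) (hε : 0 ≤ ε)
    (hLip : LipschitzOnWith L T (ball u r))
    (hdiff : ∀ v ∈ ball u r, DifferentiableAt ℝ T v)
    (hcoer : ∀ v : H, γ * ‖v‖ ^ 2 ≤ fderiv ℝ T u v v)
    (hres : ‖T u‖ ≤ ε) (hsmall : ε ≤ γ * r / 2)
    (ω : ℝ → ℝ) (hω : Monotone ω)
    (hmod : ∀ v ∈ closedBall u r, ‖fderiv ℝ T v - fderiv ℝ T u‖ ≤ ω ‖v - u‖)
    (hωr : ω r ≤ γ / 2) :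
    ∃ ub ∈ closedBall u (2 * ε / γ), T ub = 0 := by
  set A := fderiv ℝ T u with hAdef
  have hco : ∀ v : H, γ * ‖v‖ * ‖v‖ ≤ A v v := by
    intro v
    have h := hcoer v
    rw [pow_two, ← mul_assoc] at h
    exact h
  have hAco : IsCoercive A := ⟨γ, hγ, hco⟩
  set E := hAco.continuousLinearEquivOfBilin with hEdef
  have hE : ∀ v w : H, ⟪E v, w⟫_ℝ = A v w := hAco.continuousLinearEquivOfBilin_apply
  -- inverse bound
  have hEinv : ∀ z : H, ‖E.symm z‖ ≤ ‖z‖ / γ := by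
    intro z
    set v := E.symm z with hv
    have h3 : A v v = ⟪z, v⟫_ℝ := by rw [← hE, hv, E.apply_symm_apply]
    have h1 : γ * ‖v‖ * ‖v‖ ≤ ‖z‖ * ‖v‖ := by
      calc γ * ‖v‖ * ‖v‖ ≤ A v v := hco v
        _ = ⟪z, v⟫_ℝ := h3
        _ ≤ ‖z‖ * ‖v‖ := real_inner_le_norm z v
    rcases eq_or_lt_of_le (norm_nonneg v) with hv0 | hv0
    · rw [← hv0]; positivity
    · have h2 : γ * ‖v‖ ≤ ‖z‖ := le_of_mul_le_mul_right h1 hv0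
      rw [le_div_iff₀ hγ]
      linarith
  -- solving `A (E.symm (riesz f)) = f`
  have hsolve : ∀ f : H →L[ℝ] ℝ,
      A (E.symm ((InnerProductSpace.toDual ℝ H).symm f)) = f := by
    intro f
    ext w
    have h1 := hE (E.symm ((InnerProductSpace.toDual ℝ H).symm f)) w
    rw [E.apply_symm_apply, InnerProductSpace.toDual_symm_apply] at h1
    exact h1.symm
  -- mean value estimate
  have hmvt : ∀ x ∈ ball u r, ∀ z ∈ ball u r,
      ‖T x - T z - A (x - z)‖ ≤ γ / 2 * ‖x - z‖ := by
    intro x hx z hz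
    have hder : ∀ w ∈ ball u r,
        HasFDerivWithinAt (fun w => T w - A w) (fderiv ℝ T w - A) (ball u r) w :=
      fun w hw => ((hdiff w hw).hasFDerivAt.sub (A.hasFDerivAt)).hasFDerivWithinAt
    have hbound : ∀ w ∈ ball u r, ‖fderiv ℝ T w - A‖ ≤ γ / 2 := by
      intro w hw
      have h1 := hmod w (ball_subset_closedBall hw)
      have h2 : ‖w - u‖ ≤ r := le_of_lt (mem_ball_iff_norm.mp hw)
      exact h1.trans ((hω h2).trans hωr)
    have h := (convex_ball u r).norm_image_sub_le_of_norm_hasFDerivWithin_le hder hbound hz hx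
    have heq : T x - A x - (T z - A z) = T x - T z - A (x - z) := by
      rw [map_sub]; abel
    rwa [heq] at h
  -- the Newton iteration core lemma
  have key : ∀ y : H, ‖y - u‖ + 2 * ‖T y‖ / γ < r →
      ∃ ub ∈ closedBall u (‖y - u‖ + 2 * ‖T y‖ / γ), T ub = 0 := by
    intro y hy
    set c := ‖T y‖ with hc
    have hc0 : 0 ≤ c := norm_nonneg _
    set g : H → H := fun x => x - E.symm ((InnerProductSpace.toDual ℝ H).symm (T x))
      with hgdef
    set x : ℕ → H := fun n => g^[n] y with hxdef
    have hx0 : x 0 = y := rfl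
    have hxs : ∀ n, x (n + 1) = g (x n) := fun n => Function.iterate_succ_apply' g n y
    have hdiffstep : ∀ n, x (n + 1) - x n
        = -(E.symm ((InnerProductSpace.toDual ℝ H).symm (T (x n)))) := by
      intro n; rw [hxs]; show x n - _ - x n = _; abel
    have hstep : ∀ n, ‖x (n + 1) - x n‖ ≤ ‖T (x n)‖ / γ := by
      intro n
      rw [hdiffstep, norm_neg]
      calc ‖E.symm ((InnerProductSpace.toDual ℝ H).symm (T (x n)))‖
          ≤ ‖(InnerProductSpace.toDual ℝ H).symm (T (x n))‖ / γ := hEinv _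
        _ = ‖T (x n)‖ / γ := by rw [LinearIsometryEquiv.norm_map]
    have hAstep : ∀ n, A (x (n + 1) - x n) = -(T (x n)) := by
      intro n; rw [hdiffstep, map_neg, hsolve]
    have main : ∀ n, ‖T (x n)‖ ≤ c * (1 / 2) ^ n ∧
        ‖x n - u‖ ≤ ‖y - u‖ + 2 * c / γ * (1 - (1 / 2) ^ n) := by
      intro n
      induction n with
      | zero => simp [hx0, hc]
      | succ n ih =>
        have hhalf : (0:ℝ) < (1 / 2 : ℝ) ^ n := by positivity
        have hhalf1 : (1 / 2 : ℝ) ^ n ≤ 1 := by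
          apply pow_le_one₀ <;> norm_num
        have hcγ : 0 ≤ 2 * c / γ := by positivity
        have hxn_ball : x n ∈ ball u r := by
          rw [mem_ball_iff_norm]
          have h5 : 2 * c / γ * (1 - (1 / 2) ^ n) ≤ 2 * c / γ * 1 :=
            mul_le_mul_of_nonneg_left (by linarith) hcγ
          calc ‖x n - u‖ ≤ ‖y - u‖ + 2 * c / γ * (1 - (1 / 2) ^ n) := ih.2
            _ ≤ ‖y - u‖ + 2 * c / γ := by linarith
            _ < r := hy
        have hstepn : ‖x (n + 1) - x n‖ ≤ c * (1 / 2) ^ n / γ :=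
          (hstep n).trans (div_le_div_of_nonneg_right ih.1 hγ.le)
        have hxn1_norm : ‖x (n + 1) - u‖
            ≤ ‖y - u‖ + 2 * c / γ * (1 - (1 / 2) ^ (n + 1)) := by
          have htri := norm_add_le (x (n + 1) - x n) (x n - u)
          rw [sub_add_sub_cancel] at htri
          have heq : c * (1 / 2) ^ n / γ + 2 * c / γ * (1 - (1 / 2) ^ n)
              = 2 * c / γ * (1 - (1 / 2) ^ (n + 1)) := by
            field_simp
            ring
          linarith [ih.2, hstepn, htri, heq]
        have hxn1_ball : x (n + 1) ∈ ball u r := by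
          rw [mem_ball_iff_norm]
          have h5 : 2 * c / γ * (1 - (1 / 2) ^ (n + 1)) ≤ 2 * c / γ * 1 := by
            apply mul_le_mul_of_nonneg_left _ hcγ
            have : (0:ℝ) < (1 / 2 : ℝ) ^ (n + 1) := by positivity
            linarith
          calc ‖x (n + 1) - u‖ ≤ ‖y - u‖ + 2 * c / γ * (1 - (1 / 2) ^ (n + 1)) :=
              hxn1_norm
            _ ≤ ‖y - u‖ + 2 * c / γ := by linarith
            _ < r := hy
        constructor
        · have hTeq : T (x (n + 1))
              = T (x (n + 1)) - T (x n) - A (x (n + 1) - x n) := by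
            rw [hAstep]; abel
          calc ‖T (x (n + 1))‖
              = ‖T (x (n + 1)) - T (x n) - A (x (n + 1) - x n)‖ := by rw [← hTeq]
            _ ≤ γ / 2 * ‖x (n + 1) - x n‖ := hmvt _ hxn1_ball _ hxn_ball
            _ ≤ γ / 2 * (c * (1 / 2) ^ n / γ) :=
                mul_le_mul_of_nonneg_left hstepn (by positivity)
            _ = c * (1 / 2) ^ (n + 1) := by field_simp; ring
        · exact hxn1_norm
    -- Cauchy sequence and limit
    have hcauchy : CauchySeq x := by
      apply cauchySeq_of_le_geometric (1 / 2) (c / γ) (by norm_num)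
      intro n
      rw [dist_eq_norm, norm_sub_rev]
      calc ‖x (n + 1) - x n‖ ≤ ‖T (x n)‖ / γ := hstep n
        _ ≤ c * (1 / 2) ^ n / γ := div_le_div_of_nonneg_right (main n).1 hγ.le
        _ = c / γ * (1 / 2) ^ n := by ring
    obtain ⟨ub, hub⟩ := cauchySeq_tendsto_of_complete hcauchy
    have hub_norm : ‖ub - u‖ ≤ ‖y - u‖ + 2 * c / γ := by
      have htend : Filter.Tendsto (fun n => ‖x n - u‖) Filter.atTop (nhds ‖ub - u‖) :=
        ((hub.sub tendsto_const_nhds).norm)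
      apply le_of_tendsto htend
      filter_upwards with n
      have hcγ : 0 ≤ 2 * c / γ := by positivity
      have hh : (0:ℝ) < (1 / 2 : ℝ) ^ n := by positivity
      have h5 : 2 * c / γ * (1 - (1 / 2) ^ n) ≤ 2 * c / γ * 1 :=
        mul_le_mul_of_nonneg_left (by linarith) hcγ
      calc ‖x n - u‖ ≤ ‖y - u‖ + 2 * c / γ * (1 - (1 / 2) ^ n) := (main n).2
        _ ≤ ‖y - u‖ + 2 * c / γ := by linarith
    have hub_ball : ub ∈ ball u r := mem_ball_iff_norm.mpr (lt_of_le_of_lt hub_norm hy)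
    have hTcont : ContinuousAt T ub := (hdiff ub hub_ball).continuousAt
    have hT1 : Filter.Tendsto (fun n => T (x n)) Filter.atTop (nhds (T ub)) :=
      hTcont.tendsto.comp hub
    have hT2 : Filter.Tendsto (fun n => T (x n)) Filter.atTop (nhds 0) := by
      rw [tendsto_zero_iff_norm_tendsto_zero]
      apply squeeze_zero (fun n => norm_nonneg _) (fun n => (main n).1)
      have h0 : Filter.Tendsto (fun n : ℕ => (1 / 2 : ℝ) ^ n) Filter.atTop (nhds 0) :=
        tendsto_pow_atTop_nhds_zero_of_lt_one (by norm_num) (by norm_num)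
      simpa using h0.const_mul c
    have hTub : T ub = 0 := tendsto_nhds_unique hT1 hT2
    exact ⟨ub, mem_closedBall_iff_norm.mpr hub_norm, hTub⟩
  -- assemble the two cases
  by_cases hcase : 2 * ‖T u‖ / γ < r
  · obtain ⟨ub, hmem, hz⟩ := key u (by simpa using hcase)
    refine ⟨ub, ?_, hz⟩
    apply closedBall_subset_closedBall _ hmem
    have : 2 * ‖T u‖ / γ ≤ 2 * ε / γ := by
      apply div_le_div_of_nonneg_right (by linarith) hγ.le
    simpa using this
  · -- tight case: ‖T u‖ = ε = γ r / 2
    push_neg at hcase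
    have hTu : γ * r / 2 ≤ ‖T u‖ := by
      rw [le_div_iff₀ hγ] at hcase
      linarith
    have hTuε : ‖T u‖ = ε := le_antisymm hres (by linarith)
    have hεr : ε = γ * r / 2 := le_antisymm hsmall (by linarith)
    have hεpos : 0 < ε := by rw [hεr]; positivity
    have h2εγ : 2 * ε / γ = r := by rw [hεr]; field_simp
    -- differentiability at u: pick δ for error γ/4
    have hdu := (hdiff u (mem_ball_self hr)).hasFDerivAt
    have hlo := hasFDerivAt_iff_isLittleO_nhds_zero.mp hdu
    have hbdd := hlo.def (show (0:ℝ) < γ / 4 by positivity)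
    rw [Metric.eventually_nhds_iff] at hbdd
    obtain ⟨δ, hδ, hδbound⟩ := hbdd
    set w := E.symm ((InnerProductSpace.toDual ℝ H).symm (T u)) with hwdef
    have hwle : ‖w‖ ≤ r / 2 := by
      calc ‖w‖ ≤ ‖(InnerProductSpace.toDual ℝ H).symm (T u)‖ / γ := hEinv _
        _ = ‖T u‖ / γ := by rw [LinearIsometryEquiv.norm_map]
        _ = r / 2 := by rw [hTuε, hεr]; field_simp
    set t : ℝ := min 1 (δ / r) with htdef
    have ht0 : 0 < t := lt_min one_pos (by positivity)
    have ht1 : t ≤ 1 := min_le_left _ _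
    have htw : ‖-(t • w)‖ < δ := by
      rw [norm_neg, norm_smul, Real.norm_eq_abs, abs_of_pos ht0]
      have h1 : t ≤ δ / r := min_le_right _ _
      have h2 : t * ‖w‖ ≤ (δ / r) * (r / 2) :=
        mul_le_mul h1 hwle (norm_nonneg _) (by positivity)
      have h3 : (δ / r) * (r / 2) = δ / 2 := by field_simp
      rw [h3] at h2
      linarith
    set y : H := u - t • w with hydef
    have hyu : y - u = -(t • w) := by rw [hydef]; abel
    have hynorm : ‖y - u‖ = t * ‖w‖ := by
      rw [hyu, norm_neg, norm_smul, Real.norm_eq_abs, abs_of_pos ht0]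
    -- the residual at y
    have herr := hδbound (show dist (-(t • w)) 0 < δ by rw [dist_zero_right]; exact htw)
    -- `herr : ‖T (u + -(t•w)) - T u - A (-(t•w))‖ ≤ γ/4 * ‖-(t•w)‖`
    have hA_tw : A (-(t • w)) = -(t • T u) := by
      rw [map_neg, map_smul, hwdef, hsolve]
    have huy : u + -(t • w) = y := by rw [hydef]; abel
    rw [huy, hA_tw] at herr
    have hTy : ‖T y‖ ≤ (1 - t) * ε + γ / 4 * (t * ‖w‖) := by
      have hsplit : T y = (T y - T u + t • T u) + ((1 - t) • T u) := by
        module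
      have h1 : ‖T y - T u + t • T u‖ ≤ γ / 4 * (t * ‖w‖) := by
        have : T y - T u + t • T u = T y - T u - -(t • T u) := by abel
        rw [this]
        calc ‖T y - T u - -(t • T u)‖ ≤ γ / 4 * ‖-(t • w)‖ := herr
          _ = γ / 4 * (t * ‖w‖) := by
              rw [norm_neg, norm_smul, Real.norm_eq_abs, abs_of_pos ht0]
      have h2 : ‖(1 - t) • T u‖ = (1 - t) * ε := by
        rw [norm_smul (1 - t) (T u), Real.norm_eq_abs,
          abs_of_nonneg (by linarith : (0:ℝ) ≤ 1 - t), hTuε]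
      calc ‖T y‖ = ‖(T y - T u + t • T u) + ((1 - t) • T u)‖ := by rw [← hsplit]
        _ ≤ ‖T y - T u + t • T u‖ + ‖(1 - t) • T u‖ := norm_add_le _ _
        _ ≤ γ / 4 * (t * ‖w‖) + (1 - t) * ε := by linarith
        _ = (1 - t) * ε + γ / 4 * (t * ‖w‖) := by ring
    -- check the hypothesis of `key` at `y`
    have hkeyhyp : ‖y - u‖ + 2 * ‖T y‖ / γ < r := by
      have h1 : 2 * ‖T y‖ / γ ≤ 2 * ((1 - t) * ε + γ / 4 * (t * ‖w‖)) / γ :=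
        div_le_div_of_nonneg_right (by linarith) hγ.le
      have h2 : 2 * ((1 - t) * ε + γ / 4 * (t * ‖w‖)) / γ
          = (1 - t) * (2 * ε / γ) + t * ‖w‖ / 2 := by
        field_simp
        ring
      have h3 : t * ‖w‖ ≤ t * (r / 2) :=
        mul_le_mul_of_nonneg_left hwle (le_of_lt ht0)
      have h4 : t * r > 0 := by positivity
      rw [hynorm]
      rw [h2, h2εγ] at h1
      -- goal: t*‖w‖ + 2‖T y‖/γ < r, using h1 : 2‖Ty‖/γ ≤ (1-t)*r + t*‖w‖/2
      nlinarith [h1, h3, h4]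
    obtain ⟨ub, hmem, hz⟩ := key y hkeyhyp
    refine ⟨ub, ?_, hz⟩
    apply closedBall_subset_closedBall _ hmem
    rw [h2εγ]
    linarith [hkeyhyp]
end
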